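/- arXiv:1803.04431 — 3 statements merged into one kernel-verified Lean document; each statement's English description precedes it below -/
import Mathlib

section
/- Let S be a symmetric n×n matrix and Z an n×q matrix with full column rank. The minimizers of the Frobenius-norm objective ‖Z Λ Zᵀ − S + σ² I‖_F² over symmetric q×q matrices Λ and scalars σ² are given by σ̂² = tr[S (I − Z Z†)] / (n − q) and Λ̂ = Z† S Z†ᵀ − σ̂² (ZᵀZ)^{-1}, where Z† = (ZᵀZ)^{-1} Zᵀ is the Moore–Penrose pseudoinverse of Z. -/
open Matrix

private lemma trace_tmul_comm {m : Type*} [Fintype m] (A B : Matrix m m ℝ) :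
    (Aᵀ * B).trace = (Bᵀ * A).trace := by
  rw [← Matrix.trace_transpose (Aᵀ * B), Matrix.transpose_mul, Matrix.transpose_transpose]

/-- Closed-form approximate variance components: for symmetric `S` and `Z` of full
column rank (with `Z† = (ZᵀZ)⁻¹ Zᵀ`), the pair
`σ̂² = tr[S (I − Z Z†)]/(n − q)` and `Λ̂ = Z† S Z†ᵀ − σ̂² (ZᵀZ)⁻¹`
minimizes `‖Z Λ Zᵀ − S + σ² I‖_F²` over symmetric `Λ` and scalars `σ²`. -/
theorem avc_closed_form {n q : ℕ} (hq : q < n)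
    (S : Matrix (Fin n) (Fin n) ℝ) (hS : S.IsSymm)
    (Z : Matrix (Fin n) (Fin q) ℝ) (hZ : IsUnit (Zᵀ * Z).det) :
    let Zd : Matrix (Fin q) (Fin n) ℝ := (Zᵀ * Z)⁻¹ * Zᵀ
    let σ2 : ℝ := (S * ((1 : Matrix (Fin n) (Fin n) ℝ) - Z * Zd)).trace / ((n : ℝ) - q)
    let Λ0 : Matrix (Fin q) (Fin q) ℝ := Zd * S * Zdᵀ - σ2 • (Zᵀ * Z)⁻¹
    ∀ (Λ : Matrix (Fin q) (Fin q) ℝ), Λ.IsSymm → ∀ s : ℝ,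
      ((Z * Λ0 * Zᵀ - S + σ2 • (1 : Matrix (Fin n) (Fin n) ℝ))ᵀ *
          (Z * Λ0 * Zᵀ - S + σ2 • (1 : Matrix (Fin n) (Fin n) ℝ))).trace ≤
        ((Z * Λ * Zᵀ - S + s • (1 : Matrix (Fin n) (Fin n) ℝ))ᵀ *
          (Z * Λ * Zᵀ - S + s • (1 : Matrix (Fin n) (Fin n) ℝ))).trace := by
  intro Zd σ2 Λ0 Λ hΛ s
  have hnq : ((n : ℝ) - q) ≠ 0 := by
    have : (q : ℝ) < n := by exact_mod_cast hq
    linarith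
  have hGsymm : (Zᵀ * Z)ᵀ = Zᵀ * Z := by simp [transpose_mul]
  have hGinv : (Zᵀ * Z)⁻¹ * (Zᵀ * Z) = 1 := nonsing_inv_mul _ hZ
  have hGinv' : (Zᵀ * Z) * (Zᵀ * Z)⁻¹ = 1 := mul_nonsing_inv _ hZ
  have hGisymm : ((Zᵀ * Z)⁻¹)ᵀ = (Zᵀ * Z)⁻¹ := by
    rw [transpose_nonsing_inv, hGsymm]
  have hZdT : Zdᵀ = Z * (Zᵀ * Z)⁻¹ := by
    show ((Zᵀ * Z)⁻¹ * Zᵀ)ᵀ = _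
    rw [transpose_mul, transpose_transpose, hGisymm]
  have hσ2 : σ2 * ((n : ℝ) - q) = (S * ((1 : Matrix (Fin n) (Fin n) ℝ) - Z * Zd)).trace :=
    div_mul_cancel₀ _ hnq
  set M0 : Matrix (Fin n) (Fin n) ℝ := Z * Λ0 * Zᵀ - S + σ2 • 1 with hM0
  set D : Matrix (Fin n) (Fin n) ℝ := Z * (Λ - Λ0) * Zᵀ + (s - σ2) • 1 with hD
  have key1 : Zᵀ * M0 * Z = 0 := by
    have e1 : Zᵀ * (Z * Λ0 * Zᵀ) * Z = Zᵀ * S * Z - σ2 • (Zᵀ * Z) := by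
      show Zᵀ * (Z * ((Zᵀ * Z)⁻¹ * Zᵀ * S * Zdᵀ - σ2 • (Zᵀ * Z)⁻¹) * Zᵀ) * Z = _
      rw [hZdT]
      simp only [Matrix.mul_sub, Matrix.sub_mul, Matrix.mul_smul, Matrix.smul_mul]
      rw [show Zᵀ * (Z * ((Zᵀ * Z)⁻¹ * Zᵀ * S * (Z * (Zᵀ * Z)⁻¹)) * Zᵀ) * Z
          = ((Zᵀ * Z) * (Zᵀ * Z)⁻¹) * (Zᵀ * S * Z) * ((Zᵀ * Z)⁻¹ * (Zᵀ * Z)) by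
        simp only [Matrix.mul_assoc],
        show Zᵀ * (Z * (Zᵀ * Z)⁻¹ * Zᵀ) * Z = (Zᵀ * Z) * (Zᵀ * Z)⁻¹ * (Zᵀ * Z) by
        simp only [Matrix.mul_assoc],
        hGinv, hGinv']
      simp
    rw [hM0]
    simp only [Matrix.mul_sub, Matrix.sub_mul, Matrix.mul_add, Matrix.add_mul,
      Matrix.mul_smul, Matrix.smul_mul, Matrix.mul_one]
    rw [e1]
    abel
  have key2 : M0.trace = 0 := by
    have t1 : (Z * Λ0 * Zᵀ).trace = (S * (Z * Zd)).trace - σ2 * q := by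
      rw [trace_mul_cycle]
      show ((Zᵀ * Z) * (Zd * S * Zdᵀ - σ2 • (Zᵀ * Z)⁻¹)).trace = _
      rw [Matrix.mul_sub, hZdT, Matrix.mul_smul, hGinv']
      rw [show (Zᵀ * Z) * (Zd * S * (Z * (Zᵀ * Z)⁻¹)) = ((Zᵀ * Z) * (Zd * S * Z)) * (Zᵀ * Z)⁻¹ by
        simp only [Matrix.mul_assoc]]
      rw [trace_sub, trace_smul, trace_one, trace_mul_comm]
      rw [show (Zᵀ * Z)⁻¹ * ((Zᵀ * Z) * (Zd * S * Z)) = ((Zᵀ * Z)⁻¹ * (Zᵀ * Z)) * (Zd * S * Z) by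
        simp only [Matrix.mul_assoc], hGinv, Matrix.one_mul]
      have : (Zd * S * Z).trace = (S * (Z * Zd)).trace := by
        rw [trace_mul_cycle, trace_mul_comm S (Z * Zd)]
      rw [this]
      simp [smul_eq_mul, Fintype.card_fin]
    have t2 : (S * ((1 : Matrix (Fin n) (Fin n) ℝ) - Z * Zd)).trace
        = S.trace - (S * (Z * Zd)).trace := by
      rw [Matrix.mul_sub, trace_sub, Matrix.mul_one]
    rw [hM0, trace_add, trace_sub, t1, trace_smul, trace_one]
    rw [t2] at hσ2
    simp only [smul_eq_mul, Fintype.card_fin]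
    linarith [hσ2, mul_sub σ2 (n : ℝ) (q : ℝ)]
  have hΛ0symm : Λ0ᵀ = Λ0 := by
    show (Zd * S * Zdᵀ - σ2 • (Zᵀ * Z)⁻¹)ᵀ = Zd * S * Zdᵀ - σ2 • (Zᵀ * Z)⁻¹
    simp [transpose_sub, transpose_smul, transpose_mul, transpose_transpose, hGisymm,
      hS.eq, Matrix.mul_assoc]
  have hM0symm : M0ᵀ = M0 := by
    rw [hM0]
    simp [transpose_add, transpose_sub, transpose_mul, transpose_smul, transpose_one,
      transpose_transpose, hS.eq, hΛ0symm, Matrix.mul_assoc]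
  have key3 : (M0ᵀ * D).trace = 0 := by
    rw [hM0symm, hD, Matrix.mul_add, trace_add]
    have a1 : (M0 * (Z * (Λ - Λ0) * Zᵀ)).trace = 0 := by
      rw [show M0 * (Z * (Λ - Λ0) * Zᵀ) = (M0 * Z * (Λ - Λ0)) * Zᵀ by
        simp only [Matrix.mul_assoc]]
      rw [trace_mul_comm]
      rw [show Zᵀ * (M0 * Z * (Λ - Λ0)) = (Zᵀ * M0 * Z) * (Λ - Λ0) by
        simp only [Matrix.mul_assoc]]
      rw [key1]
      simp
    have a2 : (M0 * ((s - σ2) • (1 : Matrix (Fin n) (Fin n) ℝ))).trace = 0 := by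
      rw [Matrix.mul_smul, Matrix.mul_one, trace_smul, key2]
      simp
    rw [a1, a2, add_zero]
  have hMdec : Z * Λ * Zᵀ - S + s • (1 : Matrix (Fin n) (Fin n) ℝ) = M0 + D := by
    rw [hM0, hD]
    simp only [Matrix.mul_sub, Matrix.sub_mul, sub_smul]
    abel
  have hDD : 0 ≤ (Dᵀ * D).trace := by
    unfold Matrix.trace
    apply Finset.sum_nonneg
    intro i _
    simp only [Matrix.diag_apply, Matrix.mul_apply, Matrix.transpose_apply]
    apply Finset.sum_nonneg
    intro j _
    exact mul_self_nonneg _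
  have hDM0 : (Dᵀ * M0).trace = 0 := by
    rw [trace_tmul_comm, key3]
  have expand : ((M0 + D)ᵀ * (M0 + D)).trace
      = (M0ᵀ * M0).trace + (M0ᵀ * D).trace + ((Dᵀ * M0).trace + (Dᵀ * D).trace) := by
    rw [transpose_add, Matrix.add_mul]
    simp only [Matrix.mul_add, trace_add]
  rw [hMdec, expand, key3, hDM0]
  linarith
end

section
/- Let S be a symmetric n×n matrix and G = Z D Zᵀ for a fixed symmetric positive semidefinite D, with G ≠ 0. Under the parameterization Λ = θD, the minimizer over θ of ‖θ G − S + σ² I‖_F² is θ* = tr(G(S − σ² I)) / tr(G²); substituting this and minimizing over σ² yields σ̂² = (1/(n − α)) [tr(S) − tr(GS)/tr(G²) · tr(G)] where α = tr(G)² / tr(G²), provided n ≠ α. -/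
open Matrix

private lemma trace_sq_sum {n : ℕ} (G : Matrix (Fin n) (Fin n) ℝ) (hG : Gᵀ = G) :
    (G * G).trace = ∑ i, ∑ j, (G i j)^2 := by
  simp only [Matrix.trace, Matrix.diag, Matrix.mul_apply]
  refine Finset.sum_congr rfl fun i _ => Finset.sum_congr rfl fun j _ => ?_
  have h : G j i = G i j := congrFun (congrFun hG i) j
  rw [h]; ring

private lemma trace_sq_pos {n : ℕ} (G : Matrix (Fin n) (Fin n) ℝ) (hG : Gᵀ = G)
    (h : G ≠ 0) : 0 < (G * G).trace := by
  rw [trace_sq_sum G hG]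
  obtain ⟨i, j, hij⟩ : ∃ i j, G i j ≠ 0 := by
    by_contra hc
    push_neg at hc
    exact h (by ext i j; simp [hc])
  have h1 : (0:ℝ) < ∑ j, (G i j)^2 :=
    Finset.sum_pos' (fun k _ => sq_nonneg _) ⟨j, Finset.mem_univ j, by positivity⟩
  exact Finset.sum_pos' (fun k _ => Finset.sum_nonneg fun l _ => sq_nonneg _)
    ⟨i, Finset.mem_univ i, h1⟩

private lemma trace_cs {n : ℕ} (G : Matrix (Fin n) (Fin n) ℝ) (hG : Gᵀ = G) :
    G.trace ^ 2 ≤ (n : ℝ) * (G * G).trace := by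
  have h1 : G.trace ^ 2 ≤ (n : ℝ) * ∑ i, (G i i)^2 := by
    have := sq_sum_le_card_mul_sum_sq (s := (Finset.univ : Finset (Fin n)))
      (f := fun i => G i i)
    simpa [Matrix.trace, Matrix.diag] using this
  refine h1.trans ?_
  rw [trace_sq_sum G hG]
  have h2 : ∑ i, (G i i)^2 ≤ ∑ i, ∑ j, (G i j)^2 :=
    Finset.sum_le_sum fun i _ =>
      Finset.single_le_sum (f := fun j => (G i j)^2) (fun j _ => sq_nonneg _)
        (Finset.mem_univ i)
  have hn0 : (0:ℝ) ≤ n := by positivity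
  exact mul_le_mul_of_nonneg_left h2 hn0

private lemma expand_trace {n : ℕ} (G S : Matrix (Fin n) (Fin n) ℝ)
    (hG : Gᵀ = G) (hS : Sᵀ = S) (θ s : ℝ) :
    ((θ • G - S + s • (1 : Matrix (Fin n) (Fin n) ℝ))ᵀ *
        (θ • G - S + s • (1 : Matrix (Fin n) (Fin n) ℝ))).trace =
      θ^2 * (G*G).trace + s^2 * n - 2*θ*(G*S).trace + 2*θ*s*G.trace
        - 2*s*S.trace + (S*S).trace := by
  have hM : (θ • G - S + s • (1 : Matrix (Fin n) (Fin n) ℝ))ᵀ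
      = θ • G - S + s • (1 : Matrix (Fin n) (Fin n) ℝ) := by
    simp [transpose_add, transpose_sub, transpose_smul, hG, hS]
  rw [hM]
  simp only [add_mul, mul_add, sub_mul, mul_sub, Matrix.smul_mul, Matrix.mul_smul,
    Matrix.one_mul, Matrix.mul_one, trace_add, trace_sub, trace_smul, trace_one,
    smul_eq_mul, smul_smul]
  rw [trace_mul_comm S G]
  simp only [Fintype.card_fin]
  ring

private lemma quad_min_theta (c N u v t p : ℝ) (hc : 0 < c) (s θ : ℝ) :
    ((u - s*v)/c)^2*c + s^2*N - 2*((u - s*v)/c)*u + 2*((u - s*v)/c)*s*v - 2*s*t + p ≤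
    θ^2*c + s^2*N - 2*θ*u + 2*θ*s*v - 2*s*t + p := by
  set a := (u - s*v)/c with ha'
  have ha : a * c = u - s*v := div_mul_cancel₀ _ hc.ne'
  have key : (θ^2*c + s^2*N - 2*θ*u + 2*θ*s*v - 2*s*t + p)
      - (a^2*c + s^2*N - 2*a*u + 2*a*s*v - 2*s*t + p)
      = c*(θ - a)^2 + 2*(a - θ)*((u - s*v) - a*c) := by ring
  rw [ha, sub_self, mul_zero, add_zero] at key
  nlinarith [mul_nonneg hc.le (sq_nonneg (θ - a))]

private lemma quad_min (c N u v t : ℝ) (hc : 0 < c) (hβ : v ^ 2 < N * c) (s : ℝ) :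
    let m := (1 / (N - v^2/c)) * (t - u/c*v)
    ((u - m*v)/c)^2*c + m^2*N - 2*((u - m*v)/c)*u + 2*((u - m*v)/c)*m*v - 2*m*t ≤
    ((u - s*v)/c)^2*c + s^2*N - 2*((u - s*v)/c)*u + 2*((u - s*v)/c)*s*v - 2*s*t := by
  intro m
  have hc' : c ≠ 0 := hc.ne'
  have hβ0 : 0 < N*c - v^2 := by linarith
  have hβ' : (0:ℝ) < N - v^2/c := by
    rw [sub_pos, div_lt_iff₀ hc]; linarith
  have key : ∀ x : ℝ, ((u - x*v)/c)^2*c + x^2*N - 2*((u - x*v)/c)*u + 2*((u - x*v)/c)*x*v - 2*x*t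
      = ((N*c - v^2)*x^2 - 2*x*(t*c - u*v) - u^2)/c := by
    intro x; field_simp; ring
  rw [key, key, div_le_div_iff₀ hc hc]
  have hm : m * (N*c - v^2) = t*c - u*v := by
    show (1 / (N - v^2/c)) * (t - u/c*v) * (N*c - v^2) = t*c - u*v
    field_simp
  rw [← hm]
  nlinarith [mul_nonneg (mul_nonneg hc.le hβ0.le) (sq_nonneg (s - m))]

/-- Closed-form AVC estimator under the parameterization `Λ = θ D`:
`θ*(σ²) = tr(G(S − σ² I))/tr(G²)` minimizes `‖θ G − S + σ² I‖_F²` over `θ`, and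
`σ̂² = (1/(n − α))[tr S − tr(GS)/tr(G²) · tr G]` with `α = tr(G)²/tr(G²)`
minimizes `σ² ↦ ‖θ*(σ²) G − S + σ² I‖_F²`. -/
theorem avc_theta_closed_form {n d : ℕ}
    (S : Matrix (Fin n) (Fin n) ℝ) (hS : S.IsSymm)
    (D : Matrix (Fin d) (Fin d) ℝ) (hD : D.PosSemidef)
    (Z : Matrix (Fin n) (Fin d) ℝ)
    (hG : Z * D * Zᵀ ≠ 0)
    (hn : (n : ℝ) ≠
      (Z * D * Zᵀ).trace ^ 2 / ((Z * D * Zᵀ) * (Z * D * Zᵀ)).trace) :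
    let G : Matrix (Fin n) (Fin n) ℝ := Z * D * Zᵀ
    let θstar : ℝ → ℝ := fun s =>
      (G * (S - s • (1 : Matrix (Fin n) (Fin n) ℝ))).trace / (G * G).trace
    let α : ℝ := G.trace ^ 2 / (G * G).trace
    let σ2 : ℝ := (1 / ((n : ℝ) - α)) *
      (S.trace - (G * S).trace / (G * G).trace * G.trace)
    (∀ s θ : ℝ,
      ((θstar s • G - S + s • (1 : Matrix (Fin n) (Fin n) ℝ))ᵀ *
          (θstar s • G - S + s • (1 : Matrix (Fin n) (Fin n) ℝ))).trace ≤
        ((θ • G - S + s • (1 : Matrix (Fin n) (Fin n) ℝ))ᵀ *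
          (θ • G - S + s • (1 : Matrix (Fin n) (Fin n) ℝ))).trace) ∧
    (∀ s : ℝ,
      ((θstar σ2 • G - S + σ2 • (1 : Matrix (Fin n) (Fin n) ℝ))ᵀ *
          (θstar σ2 • G - S + σ2 • (1 : Matrix (Fin n) (Fin n) ℝ))).trace ≤
        ((θstar s • G - S + s • (1 : Matrix (Fin n) (Fin n) ℝ))ᵀ *
          (θstar s • G - S + s • (1 : Matrix (Fin n) (Fin n) ℝ))).trace) := by
  intro G θstar α σ2
  have hSsym : Sᵀ = S := hS
  have hGsym : Gᵀ = G := by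
    have hDs : Dᵀ = D := by
      have := hD.1
      rwa [Matrix.IsHermitian, conjTranspose_eq_transpose_of_trivial] at this
    show (Z * D * Zᵀ)ᵀ = Z * D * Zᵀ
    rw [transpose_mul, transpose_mul, transpose_transpose, hDs, Matrix.mul_assoc]
  have hc : 0 < (G * G).trace := trace_sq_pos G hGsym hG
  have hcs : G.trace ^ 2 ≤ (n : ℝ) * (G * G).trace := trace_cs G hGsym
  have hn' : (n : ℝ) ≠ G.trace ^ 2 / (G * G).trace := hn
  have hβ : G.trace ^ 2 < (n : ℝ) * (G * G).trace := by
    rcases lt_or_eq_of_le hcs with h | h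
    · exact h
    · exact absurd (by rw [eq_div_iff hc.ne']; linarith) hn'
  have hθ : ∀ s : ℝ, θstar s
      = ((G * S).trace - s * G.trace) / (G * G).trace := by
    intro s
    show (G * (S - s • (1 : Matrix (Fin n) (Fin n) ℝ))).trace / (G * G).trace = _
    rw [Matrix.mul_sub, Matrix.mul_smul, Matrix.mul_one, trace_sub, trace_smul,
      smul_eq_mul]
  constructor
  · intro s θ
    rw [expand_trace G S hGsym hSsym (θstar s) s, expand_trace G S hGsym hSsym θ s,
      hθ s]
    exact quad_min_theta _ _ _ _ _ _ hc s θ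
  · intro s
    rw [expand_trace G S hGsym hSsym (θstar σ2) σ2, expand_trace G S hGsym hSsym (θstar s) s,
      hθ σ2, hθ s]
    have h2 := quad_min ((G*G).trace) (n : ℝ) ((G*S).trace) G.trace S.trace hc hβ s
    simp only at h2
    have h3 : (((G*S).trace - σ2 * G.trace)/(G*G).trace)^2*(G*G).trace + σ2^2*(n:ℝ)
        - 2*(((G*S).trace - σ2 * G.trace)/(G*G).trace)*(G*S).trace
        + 2*(((G*S).trace - σ2 * G.trace)/(G*G).trace)*σ2*G.trace - 2*σ2*S.trace ≤
        (((G*S).trace - s * G.trace)/(G*G).trace)^2*(G*G).trace + s^2*(n:ℝ)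
        - 2*(((G*S).trace - s * G.trace)/(G*G).trace)*(G*S).trace
        + 2*(((G*S).trace - s * G.trace)/(G*G).trace)*s*G.trace - 2*s*S.trace := h2
    linarith
end

section
/- Let A and B be symmetric positive semidefinite n×n matrices with (1−ε) A ⪯ B ⪯ (1+√(2/3) ε) A for some 0 ≤ ε < 1 (Loewner order), and let P be a symmetric idempotent projection matrix of rank n−q. Then |tr(P(B−A)P)| ≤ ε · tr(P A P) ≤ ε · Σ_{i=1}^{n−q} λ_i(A), where λ_1(A) ≥ λ_2(A) ≥ … are the eigenvalues of A in decreasing order, i.e., the bound is ε times the Ky Fan (n−q)-norm of A. -/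
open Matrix

private lemma psd_smul {n : ℕ} {c : ℝ} (hc : 0 ≤ c) {A : Matrix (Fin n) (Fin n) ℝ}
    (hA : A.PosSemidef) : (c • A).PosSemidef := by
  refine .of_dotProduct_mulVec_nonneg (by rw [Matrix.IsHermitian, conjTranspose_smul, star_trivial, hA.1.eq]) fun x => ?_
  rw [smul_mulVec, dotProduct_smul, smul_eq_mul]
  exact mul_nonneg hc (hA.dotProduct_mulVec_nonneg x)

private lemma psd_diag_nonneg {n : ℕ} {M : Matrix (Fin n) (Fin n) ℝ}
    (hM : M.PosSemidef) (i : Fin n) : 0 ≤ M i i := by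
  simpa using hM.dotProduct_mulVec_nonneg (Pi.single i 1)

private lemma psd_trace_nonneg {n : ℕ} {M : Matrix (Fin n) (Fin n) ℝ}
    (hM : M.PosSemidef) : 0 ≤ M.trace := by
  exact Finset.sum_nonneg fun i _ => psd_diag_nonneg hM i

/-- existence of a "dominating" set of any size. -/
private lemma exists_dominating {n : ℕ} (f : Fin n → ℝ) :
    ∀ k : ℕ, k ≤ n → ∃ T : Finset (Fin n), T.card = k ∧ ∀ i ∈ T, ∀ j ∉ T, f j ≤ f i := by
  intro k
  induction k with
  | zero => exact fun _ => ⟨∅, by simp⟩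
  | succ k ih =>
    intro hk
    obtain ⟨T, hTcard, hTdom⟩ := ih (Nat.le_of_succ_le hk)
    have hne : Tᶜ.Nonempty := by
      rw [← Finset.card_pos, Finset.card_compl, hTcard, Fintype.card_fin]
      omega
    obtain ⟨j₀, hj₀mem, hj₀max⟩ := Finset.exists_max_image Tᶜ f hne
    have hj₀ : j₀ ∉ T := Finset.mem_compl.mp hj₀mem
    refine ⟨insert j₀ T, by rw [Finset.card_insert_of_notMem hj₀, hTcard], ?_⟩
    intro i hi j hj
    rcases Finset.mem_insert.mp hi with h | h
    · subst h
      exact hj₀max j (Finset.mem_compl.mpr fun hjT => hj (Finset.mem_insert_of_mem hjT))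
    · exact hTdom i h j (fun hjT => hj (Finset.mem_insert_of_mem hjT))

private lemma sum_mul_le_ky_fan {n : ℕ} (f d : Fin n → ℝ)
    (hf : ∀ i, 0 ≤ f i) (hd0 : ∀ i, 0 ≤ d i) (hd1 : ∀ i, d i ≤ 1)
    (T : Finset (Fin n)) (hsum : ∑ i, d i ≤ (T.card : ℝ))
    (hdom : ∀ i ∈ T, ∀ j ∉ T, f j ≤ f i) :
    ∑ i, d i * f i ≤ ∑ i ∈ T, f i := by
  have hsplit : ∑ i, d i * f i = ∑ i ∈ T, d i * f i + ∑ i ∈ Tᶜ, d i * f i :=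
    (Finset.sum_add_sum_compl T _).symm
  by_cases hne : Tᶜ.Nonempty
  · obtain ⟨j₀, hj₀mem, hj₀max⟩ := Finset.exists_max_image Tᶜ f hne
    set m := f j₀ with hm
    have hm0 : 0 ≤ m := hf j₀
    have h1 : ∑ i ∈ Tᶜ, d i * f i ≤ m * ∑ i ∈ Tᶜ, d i := by
      rw [Finset.mul_sum]
      refine Finset.sum_le_sum fun i hi => ?_
      calc d i * f i ≤ d i * m := mul_le_mul_of_nonneg_left (hj₀max i hi) (hd0 i)
        _ = m * d i := mul_comm _ _
    have h2 : ∑ i ∈ Tᶜ, d i ≤ ∑ i ∈ T, (1 - d i) := by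
      have e1 : ∑ i ∈ T, (1 - d i) = (T.card : ℝ) - ∑ i ∈ T, d i := by
        rw [Finset.sum_sub_distrib, Finset.sum_const, nsmul_eq_mul, mul_one]
      have e2 : ∑ i ∈ T, d i + ∑ i ∈ Tᶜ, d i = ∑ i, d i := Finset.sum_add_sum_compl T d
      linarith
    have h3 : m * ∑ i ∈ T, (1 - d i) ≤ ∑ i ∈ T, (1 - d i) * f i := by
      rw [Finset.mul_sum]
      refine Finset.sum_le_sum fun i hi => ?_
      have hfi : m ≤ f i := hdom i hi j₀ (Finset.mem_compl.mp hj₀mem)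
      calc m * (1 - d i) = (1 - d i) * m := mul_comm _ _
        _ ≤ (1 - d i) * f i := mul_le_mul_of_nonneg_left hfi (by linarith [hd1 i])
    have h4 : ∑ i ∈ T, d i * f i + ∑ i ∈ T, (1 - d i) * f i = ∑ i ∈ T, f i := by
      rw [← Finset.sum_add_distrib]
      exact Finset.sum_congr rfl fun i _ => by ring
    have := mul_le_mul_of_nonneg_left h2 hm0
    linarith
  · rw [Finset.not_nonempty_iff_eq_empty] at hne
    rw [hsplit, hne, Finset.sum_empty, add_zero]
    refine Finset.sum_le_sum fun i _ => ?_
    calc d i * f i ≤ 1 * f i := mul_le_mul_of_nonneg_right (hd1 i) (hf i)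
      _ = f i := one_mul _

private lemma trace_diagonal_mul' {n : ℕ} (f : Fin n → ℝ) (M : Matrix (Fin n) (Fin n) ℝ) :
    (diagonal f * M).trace = ∑ i, f i * M i i := by
  simp [Matrix.trace, Matrix.diag, Matrix.mul_apply, Matrix.diagonal_apply, ite_mul]

/-- trace of a symmetric idempotent equals its rank. -/
private lemma trace_eq_rank {n : ℕ} (P : Matrix (Fin n) (Fin n) ℝ)
    (hPH : P.IsHermitian) (hidem : P * P = P) : P.trace = (P.rank : ℝ) := by
  have hμ : ∀ j, hPH.eigenvalues j = 0 ∨ hPH.eigenvalues j = 1 := by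
    intro j
    set μ := hPH.eigenvalues j with hμdef
    have hv := hPH.mulVec_eigenvectorBasis j
    set v : Fin n → ℝ := ⇑(hPH.eigenvectorBasis j) with hvdef
    have hvne : v ≠ 0 := by
      intro h
      exact hPH.eigenvectorBasis.orthonormal.ne_zero j (by ext i; exact congrFun h i)
    have h2 : P *ᵥ (P *ᵥ v) = P *ᵥ v := by
      rw [mulVec_mulVec, hidem]
    rw [hv, mulVec_smul, hv] at h2
    have h3 : (μ * μ - μ) • v = 0 := by
      rw [sub_smul, ← smul_smul, h2, sub_self]
    rcases smul_eq_zero.mp h3 with h | h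
    · have h4 : μ * (μ - 1) = 0 := by linear_combination h
      rcases mul_eq_zero.mp h4 with h0 | h1
      · exact Or.inl h0
      · exact Or.inr (by linarith [sub_eq_zero.mp h1])
    · exact absurd h hvne
  set U : Matrix (Fin n) (Fin n) ℝ := (hPH.eigenvectorUnitary : Matrix (Fin n) (Fin n) ℝ)
    with hUdef
  have hUst : star U * U = 1 := Unitary.coe_star_mul_self hPH.eigenvectorUnitary
  have htr : P.trace = ∑ j, hPH.eigenvalues j := by
    conv_lhs => rw [hPH.spectral_theorem, Unitary.conjStarAlgAut_apply]
    rw [trace_mul_cycle, hUst, one_mul, Matrix.trace_diagonal]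
    simp [RCLike.ofReal_real_eq_id]
  rw [htr, hPH.rank_eq_card_non_zero_eigs]
  rw [Fintype.card_subtype]
  rw [← Finset.sum_boole]
  refine Finset.sum_congr rfl fun j _ => ?_
  rcases hμ j with h | h <;> simp [h]

/-- Key trace bound for the AVC noise-variance error: if `(1−ε) A ⪯ B ⪯ (1+√(2/3) ε) A`
and `P` is a symmetric idempotent projection of rank `n − q`, then
`|tr(P(B−A)P)| ≤ ε tr(PAP)` and `ε tr(PAP)` is at most `ε` times the
Ky Fan `(n−q)`-norm of `A` (the largest sum of `n−q` eigenvalues of `A`). -/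
theorem avc_trace_bound {n q : ℕ} (hq : q ≤ n) (ε : ℝ)
    (hε0 : 0 ≤ ε) (hε1 : ε < 1)
    (A B P : Matrix (Fin n) (Fin n) ℝ)
    (hA : A.PosSemidef) (hB : B.PosSemidef)
    (hlo : (B - (1 - ε) • A).PosSemidef)
    (hhi : ((1 + Real.sqrt (2 / 3) * ε) • A - B).PosSemidef)
    (hP : P.IsSymm) (hidem : P * P = P) (hrank : P.rank = n - q) :
    |(P * (B - A) * P).trace| ≤ ε * (P * A * P).trace ∧
      ε * (P * A * P).trace ≤
        ε * ⨆ T : {T : Finset (Fin n) // T.card = n - q},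
          ∑ i ∈ T.1, hA.1.eigenvalues i := by
  have hPH : P.IsHermitian := by
    rw [Matrix.IsHermitian, conjTranspose_eq_transpose_of_trivial]; exact hP
  -- congruence by P preserves PSD
  have congrP : ∀ C : Matrix (Fin n) (Fin n) ℝ, C.PosSemidef → (P * C * P).PosSemidef := by
    intro C hC
    have := hC.mul_mul_conjTranspose_same P
    rwa [hPH.eq] at this
  -- Part 1
  have expand : ∀ c : ℝ, ∀ C : Matrix (Fin n) (Fin n) ℝ,
      (P * (c • A + C) * P).trace = c * (P * A * P).trace + (P * C * P).trace := by
    intro c C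
    rw [mul_add, add_mul, trace_add, mul_smul_comm, smul_mul_assoc, trace_smul, smul_eq_mul]
  have h1 : 0 ≤ ε * (P * A * P).trace + (P * (B - A) * P).trace := by
    have hC : (ε • A + (B - A)).PosSemidef := by
      have : ε • A + (B - A) = B - (1 - ε) • A := by
        rw [sub_smul, one_smul]; abel
      rw [this]; exact hlo
    have := psd_trace_nonneg (congrP _ hC)
    rwa [expand] at this
  have h2 : 0 ≤ ε * (P * A * P).trace + (P * (A - B) * P).trace := by
    have hC : (ε • A + (A - B)).PosSemidef := by
      have e : ε • A + (A - B) = ((1 - Real.sqrt (2 / 3)) * ε) • A +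
          ((1 + Real.sqrt (2 / 3) * ε) • A - B) := by
        module
      rw [e]
      refine Matrix.PosSemidef.add (psd_smul ?_ hA) hhi
      have hs : Real.sqrt (2 / 3) ≤ 1 := Real.sqrt_le_one.mpr (by norm_num)
      nlinarith
    have := psd_trace_nonneg (congrP _ hC)
    rwa [expand] at this
  have hAB : (P * (A - B) * P).trace = -(P * (B - A) * P).trace := by
    have : (A - B : Matrix (Fin n) (Fin n) ℝ) = -(B - A) := by abel
    rw [this, mul_neg, neg_mul, trace_neg]
  rw [hAB] at h2
  constructor
  · rw [abs_le]; constructor <;> linarith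
  -- Part 2
  · set lam := hA.1.eigenvalues with hlam
    have hlam0 : ∀ i, 0 ≤ lam i := fun i => hA.eigenvalues_nonneg i
    set U : Matrix (Fin n) (Fin n) ℝ := (hA.1.eigenvectorUnitary : Matrix (Fin n) (Fin n) ℝ)
      with hU
    have hUst : star U * U = 1 := Unitary.coe_star_mul_self hA.1.eigenvectorUnitary
    have hUst' : U * star U = 1 := Unitary.coe_mul_star_self hA.1.eigenvectorUnitary
    set M : Matrix (Fin n) (Fin n) ℝ := star U * P * U with hM
    -- P is PSD, so M is PSD
    have hPpsd : P.PosSemidef := by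
      have h := posSemidef_conjTranspose_mul_self P
      rwa [hPH.eq, hidem] at h
    have hstst : (star U)ᴴ = U := by rw [← Matrix.star_eq_conjTranspose, star_star]
    have hMpsd : M.PosSemidef := by
      have := hPpsd.mul_mul_conjTranspose_same (star U)
      rwa [hstst] at this
    -- 1 - M is PSD
    have hQpsd : ((1 : Matrix (Fin n) (Fin n) ℝ) - P).PosSemidef := by
      have hQH : ((1 : Matrix (Fin n) (Fin n) ℝ) - P).IsHermitian := by
        rw [Matrix.IsHermitian, conjTranspose_sub, conjTranspose_one, hPH.eq]
      have hQidem : ((1 : Matrix (Fin n) (Fin n) ℝ) - P) * (1 - P) = 1 - P := by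
        rw [mul_sub, sub_mul, sub_mul, hidem]; simp
      have h := posSemidef_conjTranspose_mul_self ((1 : Matrix (Fin n) (Fin n) ℝ) - P)
      rwa [hQH.eq, hQidem] at h
    have h1M : ((1 : Matrix (Fin n) (Fin n) ℝ) - M).PosSemidef := by
      have := hQpsd.mul_mul_conjTranspose_same (star U)
      rw [hstst] at this
      have e : star U * ((1 : Matrix (Fin n) (Fin n) ℝ) - P) * U = 1 - M := by
        rw [mul_sub, sub_mul, mul_one, hUst, hM]
      rwa [e] at this
    have hd0 : ∀ i, 0 ≤ M i i := fun i => psd_diag_nonneg hMpsd i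
    have hd1 : ∀ i, M i i ≤ 1 := by
      intro i
      have := psd_diag_nonneg h1M i
      simp only [Matrix.sub_apply, Matrix.one_apply_eq] at this
      linarith
    -- trace identity
    have htrM : M.trace = P.trace := by
      rw [hM, trace_mul_cycle, hUst', one_mul]
    have htrP : P.trace = ((n - q : ℕ) : ℝ) := by
      rw [trace_eq_rank P hPH hidem, hrank]
    have htrace : (P * A * P).trace = ∑ i, lam i * M i i := by
      have e1 : (P * A * P).trace = (A * P).trace := by
        rw [trace_mul_cycle, hidem, trace_mul_comm]
      rw [e1]
      conv_lhs => rw [hA.1.spectral_theorem, Unitary.conjStarAlgAut_apply]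
      have ed : (diagonal (RCLike.ofReal ∘ lam) : Matrix (Fin n) (Fin n) ℝ) = diagonal lam := by
        rw [RCLike.ofReal_real_eq_id]; rfl
      rw [ed, mul_assoc, trace_mul_comm, ← mul_assoc, trace_mul_comm,
        trace_diagonal_mul']
    -- Ky Fan bound
    obtain ⟨T, hTcard, hTdom⟩ := exists_dominating lam (n - q) (Nat.sub_le n q)
    have hsum : ∑ i, M i i ≤ (T.card : ℝ) := by
      have : ∑ i, M i i = M.trace := rfl
      rw [this, htrM, htrP, hTcard]
    have hKF : (P * A * P).trace ≤ ∑ i ∈ T, lam i := by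
      rw [htrace]
      have := sum_mul_le_ky_fan lam (fun i => M i i) hlam0 hd0 hd1 T hsum hTdom
      calc ∑ i, lam i * M i i = ∑ i, M i i * lam i := by
            exact Finset.sum_congr rfl fun i _ => mul_comm _ _
        _ ≤ ∑ i ∈ T, lam i := this
    have hbdd : BddAbove (Set.range fun T : {T : Finset (Fin n) // T.card = n - q} =>
        ∑ i ∈ T.1, lam i) := by
      refine ⟨∑ i, lam i, ?_⟩
      rintro x ⟨S, rfl⟩
      exact Finset.sum_le_sum_of_subset_of_nonneg (Finset.subset_univ _)
        (fun i _ _ => hlam0 i)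
    refine mul_le_mul_of_nonneg_left ?_ hε0
    exact le_trans hKF (le_ciSup hbdd ⟨T, hTcard⟩)
end
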